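/- arXiv:2102.00886 — 4 statements merged into one kernel-verified Lean document; each statement's English description precedes it below -/
import Mathlib

section
/- For every real V₀ > 0 and every integer d ≥ 5, the set { (x₁,…,x_d) ∈ (ℝ³)^d : Σ_{1≤m<n≤d} ( ‖x_m‖²·‖x_n‖² − ⟨x_m, x_n⟩² ) < V₀ } has finite Lebesgue measure in ℝ^{3d}. -/
open MeasureTheory


lemma box_volume_le (b : OrthonormalBasis (Fin 3) ℝ (EuclideanSpace ℝ (Fin 3)))
    (c : Fin 3 → ℝ) (hc : ∀ i, 0 ≤ c i) :
    volume {y : EuclideanSpace ℝ (Fin 3) | ∀ i, |(inner ℝ (b i) y : ℝ)| ≤ c i}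
      ≤ ENNReal.ofReal (8 * (c 0 * (c 1 * c 2))) := by
  have hmp := (EuclideanSpace.volume_preserving_symm_measurableEquiv_toLp (Fin 3)).comp
    b.measurePreserving_measurableEquiv
  set f : EuclideanSpace ℝ (Fin 3) → (Fin 3 → ℝ) :=
    fun y => ((MeasurableEquiv.toLp 2 (Fin 3 → ℝ)).symm) (b.measurableEquiv y) with hf
  have hfy : ∀ (y : EuclideanSpace ℝ (Fin 3)) i, f y i = (inner ℝ (b i) y : ℝ) := by
    intro y i
    show b.repr y i = _
    exact b.repr_apply_apply y i
  have hset : {y : EuclideanSpace ℝ (Fin 3) | ∀ i, |(inner ℝ (b i) y : ℝ)| ≤ c i}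
      = f ⁻¹' (Set.pi Set.univ fun i => Set.Icc (-(c i)) (c i)) := by
    ext y
    simp only [Set.mem_setOf_eq, Set.mem_preimage, Set.mem_pi, Set.mem_univ, true_implies,
      Set.mem_Icc, hfy, ← abs_le]
  rw [hset, show f = ⇑((MeasurableEquiv.toLp 2 (Fin 3 → ℝ)).symm) ∘ ⇑b.measurableEquiv from rfl,
    hmp.measure_preimage (MeasurableSet.univ_pi fun i => measurableSet_Icc).nullMeasurableSet,
    volume_pi_pi]
  have h2 : ∀ i, volume (Set.Icc (-(c i)) (c i)) = ENNReal.ofReal (2 * c i) := by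
    intro i; rw [Real.volume_Icc]; congr 1; ring
  simp_rw [h2]
  rw [Fin.prod_univ_three, ← ENNReal.ofReal_mul (by have h0 := hc 0; have h1 := hc 1; have h2 := hc 2; positivity), ← ENNReal.ofReal_mul (by have h0 := hc 0; have h1 := hc 1; have h2 := hc 2; positivity)]
  exact ENNReal.ofReal_le_ofReal (by nlinarith [hc 0, hc 1, hc 2])

lemma parseval3 (b : OrthonormalBasis (Fin 3) ℝ (EuclideanSpace ℝ (Fin 3)))
    (y : EuclideanSpace ℝ (Fin 3)) :
    ‖y‖ ^ 2 = ∑ i, (inner ℝ (b i) y : ℝ) ^ 2 := by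
  have h := b.repr.norm_map y
  rw [← h, EuclideanSpace.norm_eq]
  rw [Real.sq_sqrt (by positivity)]
  refine Finset.sum_congr rfl fun i _ => ?_
  rw [b.repr_apply_apply, Real.norm_eq_abs, sq_abs]

lemma exists_onb_first (u : EuclideanSpace ℝ (Fin 3)) (hu : ‖u‖ = 1) :
    ∃ b : OrthonormalBasis (Fin 3) ℝ (EuclideanSpace ℝ (Fin 3)), b 0 = u := by
  have hcard : Module.finrank ℝ (EuclideanSpace ℝ (Fin 3)) = Fintype.card (Fin 3) := by simp
  have horth : Orthonormal ℝ (Set.restrict {(0 : Fin 3)} (fun _ => u)) := by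
    constructor
    · intro i; exact hu
    · intro i j hij
      have hi : (i : Fin 3) = 0 := i.2
      have hj : (j : Fin 3) = 0 := j.2
      exact absurd (Subtype.ext (hi.trans hj.symm)) hij
  obtain ⟨b, hb⟩ := horth.exists_orthonormalBasis_extension_of_card_eq hcard
  exact ⟨b, hb 0 rfl⟩

lemma Aset_volume_le (V₀ : ℝ) (hV₀ : 0 < V₀) (v : EuclideanSpace ℝ (Fin 3)) :
    volume {y : EuclideanSpace ℝ (Fin 3) |
        ‖y‖ ≤ ‖v‖ ∧ ‖v‖ ^ 2 * ‖y‖ ^ 2 - (inner ℝ v y : ℝ) ^ 2 < V₀}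
      ≤ ENNReal.ofReal (16 * max 1 V₀ / (1 + ‖v‖)) := by
  set r : ℝ := ‖v‖ with hrdef
  have hr : 0 ≤ r := norm_nonneg v
  have hM1 : (1 : ℝ) ≤ max 1 V₀ := le_max_left _ _
  have hM2 : V₀ ≤ max 1 V₀ := le_max_right _ _
  rcases le_or_gt r 1 with h1 | h1
  · -- small radius: contained in cube of side 2r
    set b := EuclideanSpace.basisFun (Fin 3) ℝ
    calc volume {y : EuclideanSpace ℝ (Fin 3) |
          ‖y‖ ≤ ‖v‖ ∧ ‖v‖ ^ 2 * ‖y‖ ^ 2 - (inner ℝ v y : ℝ) ^ 2 < V₀}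
        ≤ volume {y : EuclideanSpace ℝ (Fin 3) | ∀ i, |(inner ℝ (b i) y : ℝ)| ≤ r} := by
          refine measure_mono fun y hy i => ?_
          calc |(inner ℝ (b i) y : ℝ)| ≤ ‖b i‖ * ‖y‖ := abs_real_inner_le_norm _ _
          _ = ‖y‖ := by rw [b.orthonormal.1 i, one_mul]
          _ ≤ r := hy.1
      _ ≤ ENNReal.ofReal (8 * (r * (r * r))) := box_volume_le b _ (fun _ => hr)
      _ ≤ ENNReal.ofReal (16 * max 1 V₀ / (1 + r)) := by
          refine ENNReal.ofReal_le_ofReal ?_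
          rw [le_div_iff₀ (by positivity)]
          have hX0 : (0:ℝ) ≤ r * (r * r) := by positivity
          have hX1 : r * (r * r) ≤ 1 := by nlinarith
          nlinarith
  · -- large radius: thin cylinder
    have hr' : (0 : ℝ) < r := lt_trans one_pos h1
    have hv0 : v ≠ 0 := by
      intro h; rw [hrdef, h, norm_zero] at hr'; exact lt_irrefl _ hr'
    obtain ⟨b, hb0⟩ := exists_onb_first (‖v‖⁻¹ • v) (norm_smul_inv_norm hv0)
    have hvu : v = r • (‖v‖⁻¹ • v) := by
      rw [smul_smul, mul_inv_cancel₀ (ne_of_gt hr'), one_smul]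
    set c : Fin 3 → ℝ := fun i => if i = 0 then r else Real.sqrt V₀ / r with hc
    have hcnn : ∀ i, 0 ≤ c i := by
      intro i; by_cases h : i = 0
      · simpa [hc, h] using hr
      · simp only [hc, if_neg h]; positivity
    calc volume {y : EuclideanSpace ℝ (Fin 3) |
          ‖y‖ ≤ ‖v‖ ∧ ‖v‖ ^ 2 * ‖y‖ ^ 2 - (inner ℝ v y : ℝ) ^ 2 < V₀}
        ≤ volume {y : EuclideanSpace ℝ (Fin 3) | ∀ i, |(inner ℝ (b i) y : ℝ)| ≤ c i} := by
          refine measure_mono fun y hy => ?_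
          obtain ⟨hy1, hy2⟩ := hy
          have hinner : (inner ℝ v y : ℝ) = r * (inner ℝ (b 0) y : ℝ) := by
            rw [hb0]; nth_rewrite 1 [hvu]; rw [real_inner_smul_left]
          have hpar := parseval3 b y
          rw [Fin.sum_univ_three] at hpar
          intro i
          by_cases h : i = 0
          · subst h
            simp only [c, if_pos rfl]
            calc |(inner ℝ (b 0) y : ℝ)| ≤ ‖b 0‖ * ‖y‖ := abs_real_inner_le_norm _ _
            _ = ‖y‖ := by rw [b.orthonormal.1 0, one_mul]
            _ ≤ r := hy1
          · have hkey : r ^ 2 * (inner ℝ (b i) y : ℝ) ^ 2 < V₀ := by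
              have hi12 : i = 1 ∨ i = 2 := by omega
              have hle : (inner ℝ (b 0) y : ℝ) ^ 2 + (inner ℝ (b i) y : ℝ) ^ 2 ≤ ‖y‖ ^ 2 := by
                rcases hi12 with h | h <;> subst h <;>
                  nlinarith [sq_nonneg ((inner ℝ (b 1) y : ℝ)), sq_nonneg ((inner ℝ (b 2) y : ℝ))]
              rw [hinner] at hy2
              nlinarith
            have habs : |(inner ℝ (b i) y : ℝ)| ≤ Real.sqrt V₀ / r := by
              have h2 : (inner ℝ (b i) y : ℝ) ^ 2 ≤ (Real.sqrt V₀ / r) ^ 2 := by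
                rw [div_pow, Real.sq_sqrt hV₀.le, le_div_iff₀ (by positivity)]
                nlinarith
              calc |(inner ℝ (b i) y : ℝ)| = Real.sqrt ((inner ℝ (b i) y : ℝ) ^ 2) :=
                    (Real.sqrt_sq_eq_abs _).symm
              _ ≤ Real.sqrt ((Real.sqrt V₀ / r) ^ 2) := Real.sqrt_le_sqrt h2
              _ = Real.sqrt V₀ / r := by
                  rw [Real.sqrt_sq (by positivity)]
            simpa [c, h] using habs
      _ ≤ ENNReal.ofReal (8 * (c 0 * (c 1 * c 2))) := box_volume_le b c hcnn
      _ ≤ ENNReal.ofReal (16 * max 1 V₀ / (1 + r)) := by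
          refine ENNReal.ofReal_le_ofReal ?_
          have hc0 : c 0 = r := if_pos rfl
          have hc1 : c 1 = Real.sqrt V₀ / r := if_neg (by decide)
          have hc2 : c 2 = Real.sqrt V₀ / r := if_neg (by decide)
          rw [hc0, hc1, hc2]
          have hsq : Real.sqrt V₀ * Real.sqrt V₀ = V₀ := Real.mul_self_sqrt hV₀.le
          have heq : 8 * (r * (Real.sqrt V₀ / r * (Real.sqrt V₀ / r))) = 8 * V₀ / r := by
            field_simp
            nlinarith
          rw [heq, div_le_div_iff₀ hr' (by positivity)]
          nlinarith


lemma tube_volume_lt_top (V₀ : ℝ) (hV₀ : 0 < V₀) (n : ℕ) (hn : 4 ≤ n) (m₀ : Fin (n + 1)) :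
    volume {x : Fin (n + 1) → EuclideanSpace ℝ (Fin 3) |
      ∀ k, ¬ k = m₀ → ‖x k‖ ≤ ‖x m₀‖ ∧
        ‖x m₀‖ ^ 2 * ‖x k‖ ^ 2 - (inner ℝ (x m₀) (x k) : ℝ) ^ 2 < V₀} < ⊤ := by
  set E := EuclideanSpace ℝ (Fin 3)
  set M : ℝ := max 1 V₀ with hMdef
  have hM1 : (1:ℝ) ≤ M := le_max_left _ _
  set K : Set (E × E) := {q | ‖q.2‖ ≤ ‖q.1‖ ∧
      ‖q.1‖ ^ 2 * ‖q.2‖ ^ 2 - (inner ℝ q.1 q.2 : ℝ) ^ 2 < V₀} with hKdef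
  have hK : MeasurableSet K := by
    refine MeasurableSet.inter ?_ ?_
    · exact measurableSet_le (continuous_norm.comp continuous_snd).measurable
        (continuous_norm.comp continuous_fst).measurable
    · have hcont : Continuous fun q : E × E =>
          ‖q.1‖ ^ 2 * ‖q.2‖ ^ 2 - (inner ℝ q.1 q.2 : ℝ) ^ 2 :=
        (((continuous_norm.comp continuous_fst).pow 2).mul
          ((continuous_norm.comp continuous_snd).pow 2)).sub
          ((continuous_inner : Continuous fun q : E × E => (inner ℝ q.1 q.2 : ℝ)).pow 2)
      exact measurableSet_lt hcont.measurable measurable_const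
  set W : Set (E × (Fin n → E)) := {q | ∀ j : Fin n, (q.1, q.2 j) ∈ K} with hWdef
  have hW : MeasurableSet W := by
    have : W = ⋂ j : Fin n,
        (fun q : E × (Fin n → E) => (q.1, q.2 j)) ⁻¹' K := by
      ext q; simp [hWdef, Set.mem_iInter]
    rw [this]
    exact MeasurableSet.iInter fun j =>
      (measurable_fst.prodMk ((measurable_pi_apply j).comp measurable_snd)) hK
  have hmp := volume_preserving_piFinSuccAbove (fun _ : Fin (n + 1) => E) m₀
  have hsub : {x : Fin (n + 1) → E |
      ∀ k, ¬ k = m₀ → ‖x k‖ ≤ ‖x m₀‖ ∧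
        ‖x m₀‖ ^ 2 * ‖x k‖ ^ 2 - (inner ℝ (x m₀) (x k) : ℝ) ^ 2 < V₀}
      = (MeasurableEquiv.piFinSuccAbove (fun _ : Fin (n + 1) => E) m₀) ⁻¹' W := by
    ext x
    constructor
    · intro h j
      exact h (m₀.succAbove j) (Fin.succAbove_ne m₀ j)
    · intro h k hk
      obtain ⟨j, hj⟩ := Fin.exists_succAbove_eq hk
      have h2 : (x m₀, x (m₀.succAbove j)) ∈ K := h j
      rw [hj] at h2
      exact h2
  rw [hsub, hmp.measure_preimage hW.nullMeasurableSet,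
    Measure.volume_eq_prod, Measure.prod_apply hW]
  have hfiber : ∀ v : E,
      volume (Prod.mk v ⁻¹' W)
        = volume {y : E | ‖y‖ ≤ ‖v‖ ∧
            ‖v‖ ^ 2 * ‖y‖ ^ 2 - (inner ℝ v y : ℝ) ^ 2 < V₀} ^ n := by
    intro v
    have : Prod.mk v ⁻¹' W = Set.pi Set.univ
        (fun _ : Fin n => {y : E | (v, y) ∈ K}) := by
      ext b; simp [hWdef]
    rw [this, volume_pi_pi, Finset.prod_const, Finset.card_univ, Fintype.card_fin]
    rfl
  set C : ℝ := (16 * M) ^ n with hCdef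
  have hCnn : (0:ℝ) ≤ C := by positivity
  set G : E → ENNReal :=
    fun v => ENNReal.ofReal C * ENNReal.ofReal ((1 + ‖v‖) ^ (-(4:ℝ))) with hGdef
  have hpoint : ∀ v : E, volume (Prod.mk v ⁻¹' W) ≤ G v := by
    intro v
    rw [hfiber v]
    have h1 := Aset_volume_le V₀ hV₀ v
    have hrpos : (0:ℝ) < 1 + ‖v‖ := by positivity
    have hr1 : (1:ℝ) ≤ 1 + ‖v‖ := le_add_of_nonneg_right (norm_nonneg v)
    calc volume {y : E | ‖y‖ ≤ ‖v‖ ∧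
          ‖v‖ ^ 2 * ‖y‖ ^ 2 - (inner ℝ v y : ℝ) ^ 2 < V₀} ^ n
        ≤ ENNReal.ofReal (16 * M / (1 + ‖v‖)) ^ n := pow_le_pow_left' h1 _
      _ = ENNReal.ofReal ((16 * M / (1 + ‖v‖)) ^ n) := by
          rw [ENNReal.ofReal_pow (by positivity)]
      _ ≤ G v := by
          show _ ≤ ENNReal.ofReal C * ENNReal.ofReal ((1 + ‖v‖) ^ (-(4:ℝ)))
          rw [← ENNReal.ofReal_mul hCnn]
          refine ENNReal.ofReal_le_ofReal ?_
          rw [div_pow, Real.rpow_neg hrpos.le,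
            show ((4:ℝ) = ((4:ℕ):ℝ)) by norm_num, Real.rpow_natCast, hCdef,
            ← div_eq_mul_inv]
          refine div_le_div_of_nonneg_left (by positivity) (by positivity) ?_
          exact pow_le_pow_right₀ hr1 hn
  refine lt_of_le_of_lt (lintegral_mono hpoint) ?_
  rw [hGdef]
  rw [lintegral_const_mul' _ _ ENNReal.ofReal_ne_top]
  refine ENNReal.mul_lt_top ENNReal.ofReal_lt_top ?_
  have hint : Integrable (fun v : E => (1 + ‖v‖) ^ (-(4:ℝ))) volume := by
    refine integrable_one_add_norm ?_
    rw [finrank_euclideanSpace_fin]; norm_num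
  exact (hasFiniteIntegral_iff_ofReal
    (Filter.Eventually.of_forall fun v => by positivity)).mp hint.hasFiniteIntegral

/-- For `d ≥ 5`, the valley of the `su(2)` bosonic potential,
written in coordinates `x₁,…,x_d ∈ ℝ³` as
`∑_{m<n} (‖x_m‖²‖x_n‖² − ⟨x_m,x_n⟩²) < V₀`, has finite Lebesgue measure. -/

theorem su2_valley_finite_volume (d : ℕ) (hd : 5 ≤ d) (V₀ : ℝ) (hV₀ : 0 < V₀) :
    volume {x : Fin d → EuclideanSpace ℝ (Fin 3) |
      (∑ m : Fin d, ∑ n : Fin d,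
        if m < n then ‖x m‖ ^ 2 * ‖x n‖ ^ 2 - (inner ℝ (x m) (x n) : ℝ) ^ 2 else 0)
        < V₀} < ⊤ := by
  obtain ⟨n, rfl⟩ : ∃ n, d = n + 1 := ⟨d - 1, by omega⟩
  have hn : 4 ≤ n := by omega
  have hsub : {x : Fin (n + 1) → EuclideanSpace ℝ (Fin 3) |
      (∑ m : Fin (n + 1), ∑ k : Fin (n + 1),
        if m < k then ‖x m‖ ^ 2 * ‖x k‖ ^ 2 - (inner ℝ (x m) (x k) : ℝ) ^ 2 else 0)
        < V₀}
      ⊆ ⋃ m₀ : Fin (n + 1), {x : Fin (n + 1) → EuclideanSpace ℝ (Fin 3) |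
          ∀ k, ¬ k = m₀ → ‖x k‖ ≤ ‖x m₀‖ ∧
            ‖x m₀‖ ^ 2 * ‖x k‖ ^ 2 - (inner ℝ (x m₀) (x k) : ℝ) ^ 2 < V₀} := by
    intro x hx
    simp only [Set.mem_setOf_eq] at hx
    have hnn : ∀ m k : Fin (n + 1),
        (0:ℝ) ≤ if m < k then ‖x m‖ ^ 2 * ‖x k‖ ^ 2 - (inner ℝ (x m) (x k) : ℝ) ^ 2 else 0 := by
      intro m k
      split
      · have h1 := abs_real_inner_le_norm (x m) (x k)
        have h3 := sq_abs ((inner ℝ (x m) (x k) : ℝ))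
        nlinarith [norm_nonneg (x m), norm_nonneg (x k), abs_nonneg ((inner ℝ (x m) (x k) : ℝ))]
      · exact le_refl 0
    have key : ∀ a b : Fin (n + 1), a < b →
        ‖x a‖ ^ 2 * ‖x b‖ ^ 2 - (inner ℝ (x a) (x b) : ℝ) ^ 2 < V₀ := by
      intro a b hab
      have h1 : (if a < b then ‖x a‖ ^ 2 * ‖x b‖ ^ 2 - (inner ℝ (x a) (x b) : ℝ) ^ 2 else 0)
          ≤ ∑ k : Fin (n + 1),
            if a < k then ‖x a‖ ^ 2 * ‖x k‖ ^ 2 - (inner ℝ (x a) (x k) : ℝ) ^ 2 else 0 :=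
        Finset.single_le_sum (fun k _ => hnn a k) (Finset.mem_univ b)
      have h2 : (∑ k : Fin (n + 1),
            if a < k then ‖x a‖ ^ 2 * ‖x k‖ ^ 2 - (inner ℝ (x a) (x k) : ℝ) ^ 2 else 0)
          ≤ ∑ m : Fin (n + 1), ∑ k : Fin (n + 1),
            if m < k then ‖x m‖ ^ 2 * ‖x k‖ ^ 2 - (inner ℝ (x m) (x k) : ℝ) ^ 2 else 0 :=
        Finset.single_le_sum (fun m _ => Finset.sum_nonneg fun k _ => hnn m k)
          (Finset.mem_univ a)
      rw [if_pos hab] at h1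
      linarith
    obtain ⟨m₀, -, hm₀⟩ := Finset.exists_max_image Finset.univ (fun k => ‖x k‖)
      ⟨0, Finset.mem_univ 0⟩
    refine Set.mem_iUnion.mpr ⟨m₀, fun k hk => ⟨hm₀ k (Finset.mem_univ k), ?_⟩⟩
    rcases lt_or_gt_of_ne hk with h | h
    · have := key k m₀ h
      rw [real_inner_comm] at this
      nlinarith [this]
    · exact key m₀ k h
  refine lt_of_le_of_lt (measure_mono hsub) (lt_of_le_of_lt (measure_iUnion_le _) ?_)
  rw [tsum_fintype]
  exact ENNReal.sum_lt_top.mpr fun m₀ _ => tube_volume_lt_top V₀ hV₀ n hn m₀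
end

section
/- Fix an integer d ≥ 5 and reals V₀ > 0 and ε > 0. For (a, b, z) ∈ ℝ × ℝ^{d−1} × ℂ^{d−1} define V_B(a,b,z) = 8(a² + ‖b‖²)‖z‖² − 8|b·z|² + 2(‖z‖⁴ − |z·z|²), where b·z = Σ_{n=1}^{d−1} b_n z_n, z·z = Σ_{n=1}^{d−1} z_n², ‖z‖² = Σ_{n=1}^{d−1} |z_n|², and ‖b‖² = Σ_{n=1}^{d−1} b_n². Then the integral of the weight a² over the set { (a,b,z) : V_B(a,b,z) < V₀ and 2|a| > ε }, with respect to Lebesgue measure on ℝ × ℝ^{d−1} × ℂ^{d−1} ≅ ℝ^{3(d−1)+1}, is finite. -/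
set_option maxHeartbeats 1000000

open MeasureTheory

private lemma cube_iff {x r : ℝ} (hr : 0 ≤ r) : x ^ 2 ≤ r ^ 2 ↔ x ∈ Set.Icc (-r) r := by
  constructor
  · intro h; exact Set.mem_Icc.2 (abs_le_of_sq_le_sq' h hr)
  · intro h; exact sq_le_sq' (Set.mem_Icc.1 h).1 (Set.mem_Icc.1 h).2

private lemma avol {m : ℕ} [NeZero m] (u : EuclideanSpace ℝ (Fin m)) (hu : ‖u‖ = 1)
    {R t : ℝ} (hR : 0 ≤ R) (ht : 0 ≤ t) :
    volume {x : Fin m → ℝ | (∑ n, u n * x n) ^ 2 ≤ R ^ 2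
        ∧ (∑ n, (x n) ^ 2) - (∑ n, u n * x n) ^ 2 ≤ t ^ 2}
      ≤ ENNReal.ofReal (2 * R) * ENNReal.ofReal (2 * t) ^ (m - 1) := by
  classical
  set E₀ : EuclideanSpace ℝ (Fin m) := EuclideanSpace.single (0 : Fin m) (1 : ℝ) with hE₀def
  have hE₀ : ‖E₀‖ = 1 := by
    rw [hE₀def, EuclideanSpace.norm_single]; norm_num
  set f : EuclideanSpace ℝ (Fin m) ≃ₗᵢ[ℝ] EuclideanSpace ℝ (Fin m) :=
    Submodule.reflection (Submodule.span ℝ {u - E₀})ᗮ with hfdef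
  have hfu : f u = E₀ := Submodule.reflection_sub (by rw [hu, hE₀])
  set r : Fin m → ℝ := fun n => if n = 0 then R else t with hrdef
  have hrn : ∀ n, 0 ≤ r n := fun n => by by_cases h : n = 0 <;> simp [hrdef, h, hR, ht]
  set C : Set (EuclideanSpace ℝ (Fin m)) := {w | ∀ n, (w n) ^ 2 ≤ (r n) ^ 2} with hCdef
  have hCpi : C = (MeasurableEquiv.toLp 2 (Fin m → ℝ)).symm ⁻¹' Set.univ.pi (fun n => Set.Icc (-(r n)) (r n)) := by
    ext w
    constructor
    · intro h n _; exact (cube_iff (hrn n)).1 (h n)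
    · intro h n; exact (cube_iff (hrn n)).2 (h n (Set.mem_univ n))
  -- inner products
  have key1 : ∀ x : EuclideanSpace ℝ (Fin m), (∑ n, u n * x n) = f x 0 := by
    intro x
    have h1 : (inner ℝ u x : ℝ) = ∑ n, u n * x n := by
      rw [PiLp.inner_apply]; simp [RCLike.inner_apply]; exact Finset.sum_congr rfl fun n _ => mul_comm _ _
    have h2 : (inner ℝ (f u) (f x) : ℝ) = (inner ℝ u x : ℝ) := f.inner_map_map u x
    rw [hfu] at h2
    have h3 : (inner ℝ E₀ (f x) : ℝ) = f x 0 := by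
      rw [hE₀def, EuclideanSpace.inner_single_left]; simp
    rw [← h1, ← h2, h3]
  have key2 : ∀ x : EuclideanSpace ℝ (Fin m), (∑ n, (x n) ^ 2) = ∑ n, (f x n) ^ 2 := by
    intro x
    have h2 : (inner ℝ (f x) (f x) : ℝ) = (inner ℝ x x : ℝ) := f.inner_map_map x x
    rw [PiLp.inner_apply, PiLp.inner_apply] at h2
    simpa [RCLike.inner_apply, sq] using h2.symm
  -- the set inclusion
  set A : Set (EuclideanSpace ℝ (Fin m)) := {x | (∑ n, u n * x n) ^ 2 ≤ R ^ 2
      ∧ (∑ n, (x n) ^ 2) - (∑ n, u n * x n) ^ 2 ≤ t ^ 2} with hAdef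
  have hsub : A ⊆ ⇑f ⁻¹' C := by
    intro x hx
    obtain ⟨h1, h2⟩ := hx
    rw [key1 x] at h1 h2
    rw [key2 x] at h2
    intro n
    by_cases hn : n = 0
    · subst hn; simpa [hrdef] using h1
    · have hpair : (f x 0) ^ 2 + (f x n) ^ 2 ≤ ∑ k, (f x k) ^ 2 := by
        have := Finset.sum_le_sum_of_subset_of_nonneg
          (Finset.subset_univ ({0, n} : Finset (Fin m)))
          (fun k _ _ => sq_nonneg (f x k))
        rwa [Finset.sum_pair (Ne.symm hn)] at this
      have : (f x n) ^ 2 ≤ t ^ 2 := by linarith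
      simpa [hrdef, hn] using this
  -- measure computation
  have hCmeas : MeasurableSet C := by
    rw [hCpi]
    exact (MeasurableEquiv.measurable _) (MeasurableSet.univ_pi fun n => measurableSet_Icc)
  have hvolC : volume C = ENNReal.ofReal (2 * R) * ENNReal.ofReal (2 * t) ^ (m - 1) := by
    have hpi : volume (Set.univ.pi (fun n => Set.Icc (-(r n)) (r n)) : Set (Fin m → ℝ))
        = ∏ n, ENNReal.ofReal (2 * r n) := by
      rw [volume_pi_pi]
      refine Finset.prod_congr rfl fun n _ => ?_
      rw [Real.volume_Icc]; ring_nf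
    have htrans := (EuclideanSpace.volume_preserving_symm_measurableEquiv_toLp (Fin m)).measure_preimage
      ((MeasurableSet.univ_pi fun n => measurableSet_Icc)
        : MeasurableSet (Set.univ.pi (fun n => Set.Icc (-(r n)) (r n)) : Set (Fin m → ℝ))).nullMeasurableSet
    have hpre : (MeasurableEquiv.toLp 2 (Fin m → ℝ)).symm ⁻¹'
        (Set.univ.pi (fun n => Set.Icc (-(r n)) (r n)) : Set (Fin m → ℝ)) = C := by
      rw [hCpi]
    rw [hpre] at htrans
    rw [htrans, hpi, ← Finset.mul_prod_erase Finset.univ _ (Finset.mem_univ (0 : Fin m))]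
    have h0 : r 0 = R := by simp [hrdef]
    have hprod : ∏ n ∈ Finset.univ.erase (0 : Fin m), ENNReal.ofReal (2 * r n)
        = ENNReal.ofReal (2 * t) ^ (m - 1) := by
      rw [Finset.prod_congr rfl (fun n hn => ?_), Finset.prod_const,
        Finset.card_erase_of_mem (Finset.mem_univ _), Finset.card_univ, Fintype.card_fin]
      have : r n = t := by simp [hrdef, Finset.mem_erase.1 hn |>.1]
      rw [this]
    rw [h0, hprod]
  -- measurability of A as a pi-type set
  have hAmeas : MeasurableSet {x : Fin m → ℝ | (∑ n, u n * x n) ^ 2 ≤ R ^ 2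
      ∧ (∑ n, (x n) ^ 2) - (∑ n, u n * x n) ^ 2 ≤ t ^ 2} := by
    have c1 : Continuous fun x : Fin m → ℝ => (∑ n, u n * x n) ^ 2 := by fun_prop
    have c2 : Continuous fun x : Fin m → ℝ => (∑ n, (x n) ^ 2) - (∑ n, u n * x n) ^ 2 := by
      fun_prop
    exact ((measurableSet_le c1.measurable measurable_const)).inter
      ((measurableSet_le c2.measurable measurable_const))
  calc volume {x : Fin m → ℝ | (∑ n, u n * x n) ^ 2 ≤ R ^ 2
        ∧ (∑ n, (x n) ^ 2) - (∑ n, u n * x n) ^ 2 ≤ t ^ 2}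
      = volume A := ((EuclideanSpace.volume_preserving_symm_measurableEquiv_toLp
        (Fin m)).measure_preimage hAmeas.nullMeasurableSet).symm
    _ ≤ volume (⇑f ⁻¹' C) := measure_mono hsub
    _ = volume C := f.measurePreserving.measure_preimage hCmeas.nullMeasurableSet
    _ = _ := hvolC

-- Cauchy-Schwarz for complex dot with real coefficients
private lemma cs_complex {m : ℕ} (b : Fin m → ℝ) (z : Fin m → ℂ) :
    Complex.normSq (∑ n, (b n : ℂ) * z n)
      ≤ (∑ n, (b n) ^ 2) * (∑ n, Complex.normSq (z n)) := by
  have hre : (∑ n, (b n : ℂ) * z n).re = ∑ n, b n * (z n).re := by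
    rw [Complex.re_sum]
    exact Finset.sum_congr rfl fun n _ => by simp [Complex.mul_re]
  have him : (∑ n, (b n : ℂ) * z n).im = ∑ n, b n * (z n).im := by
    rw [Complex.im_sum]
    exact Finset.sum_congr rfl fun n _ => by simp [Complex.mul_im]
  rw [Complex.normSq_apply, hre, him]
  have h1 := Finset.sum_mul_sq_le_sq_mul_sq Finset.univ b (fun n => (z n).re)
  have h2 := Finset.sum_mul_sq_le_sq_mul_sq Finset.univ b (fun n => (z n).im)
  have h3 : (∑ n, Complex.normSq (z n)) = (∑ n, ((z n).re) ^ 2) + (∑ n, ((z n).im) ^ 2) := by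
    rw [← Finset.sum_add_distrib]
    exact Finset.sum_congr rfl fun n _ => by rw [Complex.normSq_apply]; ring
  have e1 : (∑ n, b n * (z n).re) * (∑ n, b n * (z n).re) = (∑ n, b n * (z n).re) ^ 2 := by ring
  have e2 : (∑ n, b n * (z n).im) * (∑ n, b n * (z n).im) = (∑ n, b n * (z n).im) ^ 2 := by ring
  rw [e1, e2, h3]
  nlinarith [h1, h2]

private lemma tri {m : ℕ} (z : Fin m → ℂ) :
    Complex.normSq (∑ n, (z n) ^ 2) ≤ (∑ n, Complex.normSq (z n)) ^ 2 := by
  have h1 : ‖∑ n, (z n) ^ 2‖ ≤ ∑ n, Complex.normSq (z n) := by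
    refine le_trans (norm_sum_le _ _) (le_of_eq ?_)
    exact Finset.sum_congr rfl fun n _ => by
      rw [norm_pow, Complex.sq_norm]
  have h0 : (0:ℝ) ≤ ‖∑ n, (z n) ^ 2‖ := norm_nonneg _
  calc Complex.normSq (∑ n, (z n) ^ 2) = (‖∑ n, (z n) ^ 2‖) ^ 2 :=
        (Complex.sq_norm _).symm
    _ ≤ (∑ n, Complex.normSq (z n)) ^ 2 := by nlinarith

private lemma aint {m : ℕ} (hm : 4 ≤ m) {c : ℝ} (hc : 0 < c) :
    (∫⁻ a : ℝ in {a : ℝ | c < |a|}, ENNReal.ofReal (|a| ^ 2 / |a| ^ m)) < ⊤ := by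
  have hU : {a : ℝ | c < |a|} = Set.Iio (-c) ∪ Set.Ioi c := by
    ext a
    simp only [Set.mem_setOf_eq, Set.mem_union, Set.mem_Iio, Set.mem_Ioi, lt_abs]
    constructor
    · rintro (h | h)
      · right; exact h
      · left; linarith
    · rintro (h | h)
      · right; linarith
      · left; exact h
  have hIoi : (∫⁻ a : ℝ in Set.Ioi c, ENNReal.ofReal (|a| ^ 2 / |a| ^ m)) < ⊤ := by
    have hexp : ((2:ℝ) - m) < -1 := by
      have : (4:ℝ) ≤ m := by exact_mod_cast hm
      linarith
    have hint : IntegrableOn (fun a : ℝ => a ^ ((2:ℝ) - m)) (Set.Ioi c) :=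
      integrableOn_Ioi_rpow_of_lt hexp hc
    have hcong : (∫⁻ a : ℝ in Set.Ioi c, ENNReal.ofReal (|a| ^ 2 / |a| ^ m))
        = ∫⁻ a : ℝ in Set.Ioi c, ENNReal.ofReal (a ^ ((2:ℝ) - m)) := by
      refine setLIntegral_congr_fun measurableSet_Ioi ?_
      intro a ha
      have ha0 : (0:ℝ) < a := lt_trans hc ha
      dsimp only; rw [abs_of_pos ha0]
      congr 1
      rw [Real.rpow_sub ha0]
      rw [show ((2:ℝ) = ((2:ℕ):ℝ)) by norm_num, Real.rpow_natCast, Real.rpow_natCast]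
    rw [hcong]
    exact hint.lintegral_lt_top
  have hmeasg : Measurable fun a : ℝ => ENNReal.ofReal (|a| ^ 2 / |a| ^ m) := by
    apply Measurable.ennreal_ofReal
    exact ((measurable_norm.pow_const 2).div (measurable_norm.pow_const m))
  have hIio : (∫⁻ a : ℝ in Set.Iio (-c), ENNReal.ofReal (|a| ^ 2 / |a| ^ m))
      = ∫⁻ a : ℝ in Set.Ioi c, ENNReal.ofReal (|a| ^ 2 / |a| ^ m) := by
    have hind : Measurable fun a : ℝ =>
        (Set.Iio (-c)).indicator (fun a => ENNReal.ofReal (|a| ^ 2 / |a| ^ m)) a :=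
      hmeasg.indicator measurableSet_Iio
    have hneg := (Measure.measurePreserving_neg (volume : Measure ℝ)).lintegral_comp hind
    rw [← lintegral_indicator measurableSet_Iio, ← lintegral_indicator measurableSet_Ioi, ← hneg]
    refine lintegral_congr fun a => ?_
    by_cases h : a ∈ Set.Ioi c
    · have h1 : (-a : ℝ) ∈ Set.Iio (-c) := by
        simp only [Set.mem_Iio]; simp only [Set.mem_Ioi] at h; linarith
      rw [Set.indicator_of_mem h1, Set.indicator_of_mem h, abs_neg]
    · have h1 : (-a : ℝ) ∉ Set.Iio (-c) := by
        simp only [Set.mem_Iio, not_lt]; simp only [Set.mem_Ioi, not_lt] at h; linarith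
      rw [Set.indicator_of_notMem h1, Set.indicator_of_notMem h]
  rw [hU]
  refine lt_of_le_of_lt (lintegral_union_le _ _ _) ?_
  rw [hIio]
  exact ENNReal.add_lt_top.2 ⟨hIoi, hIoi⟩

private lemma zvol {m : ℕ} [NeZero m] (b : Fin m → ℝ) (hb : b ≠ 0) {R s : ℝ}
    (hR : 0 ≤ R) (hs : 0 ≤ s) :
    volume {z : Fin m → ℂ | (∑ n, Complex.normSq (z n)) ≤ R ^ 2
        ∧ (∑ n, (b n) ^ 2) * (∑ n, Complex.normSq (z n))
            - Complex.normSq (∑ n, (b n : ℂ) * z n) ≤ s ^ 2}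
      ≤ (ENNReal.ofReal (2 * R) * ENNReal.ofReal (2 * min R (s / ‖b‖)) ^ (m - 1)) ^ 2 := by
  classical
  set B : ℝ := ∑ n, (b n) ^ 2 with hBdef
  have hB : 0 < B := by
    obtain ⟨n, hn⟩ : ∃ n, b n ≠ 0 := Function.ne_iff.1 hb
    exact Finset.sum_pos' (fun k _ => sq_nonneg _) ⟨n, Finset.mem_univ n, by positivity⟩
  have hsB : 0 < Real.sqrt B := Real.sqrt_pos.2 hB
  set u : EuclideanSpace ℝ (Fin m) := WithLp.toLp 2 (fun n => b n / Real.sqrt B) with hudef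
  have hu : ‖u‖ = 1 := by
    rw [EuclideanSpace.norm_eq]
    have : ∑ n, ‖u n‖ ^ 2 = 1 := by
      simp only [hudef, PiLp.toLp_apply, Real.norm_eq_abs, sq_abs, div_pow]
      rw [← Finset.sum_div, Real.sq_sqrt hB.le, ← hBdef, div_self hB.ne']
    rw [this, Real.sqrt_one]
  set t : ℝ := min R (s / Real.sqrt B) with htdef
  have ht0 : 0 ≤ t := le_min hR (by positivity)
  have ht2min : t ^ 2 = min (R ^ 2) ((s / Real.sqrt B) ^ 2) := by
    have hq : 0 ≤ s / Real.sqrt B := by positivity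
    rcases le_total R (s / Real.sqrt B) with h | h
    · rw [htdef, min_eq_left h, min_eq_left (by nlinarith)]
    · rw [htdef, min_eq_right h, min_eq_right (by nlinarith)]
  -- target t bound
  have hbnorm : 0 < ‖b‖ := norm_pos_iff.2 hb
  have hble : ‖b‖ ≤ Real.sqrt B := by
    rw [pi_norm_le_iff_of_nonneg hsB.le]
    intro n
    rw [Real.norm_eq_abs, ← Real.sqrt_sq_eq_abs]
    exact Real.sqrt_le_sqrt (Finset.single_le_sum (fun k (_ : k ∈ Finset.univ) => sq_nonneg (b k))
      (Finset.mem_univ n))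
  have htle : t ≤ min R (s / ‖b‖) :=
    min_le_min le_rfl (div_le_div_of_nonneg_left hs hbnorm hble)
  -- the measure-preserving map to pairs
  set φ : (Fin m → ℂ) → (Fin m → ℝ) × (Fin m → ℝ) :=
    (MeasurableEquiv.arrowProdEquivProdArrow ℝ ℝ (Fin m)) ∘
      (fun z n => Complex.measurableEquivRealProd (z n)) with hφdef
  have hφ : MeasurePreserving φ volume volume :=
    (volume_measurePreserving_arrowProdEquivProdArrow ℝ ℝ (Fin m)).comp
      (volume_preserving_pi fun _ => Complex.volume_preserving_equiv_real_prod)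
  have hφapp : ∀ z, φ z = (fun n => (z n).re, fun n => (z n).im) := by
    intro z
    simp only [hφdef, Function.comp_apply, MeasurableEquiv.arrowProdEquivProdArrow,
      Complex.measurableEquivRealProd]
    rfl
  set A : Set (Fin m → ℝ) := {x | (∑ n, u n * x n) ^ 2 ≤ R ^ 2
      ∧ (∑ n, (x n) ^ 2) - (∑ n, u n * x n) ^ 2 ≤ t ^ 2} with hAdef
  have hAmeas : MeasurableSet A := by
    have c1 : Continuous fun x : Fin m → ℝ => (∑ n, u n * x n) ^ 2 := by fun_prop
    have c2 : Continuous fun x : Fin m → ℝ => (∑ n, (x n) ^ 2) - (∑ n, u n * x n) ^ 2 := by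
      fun_prop
    exact ((measurableSet_le c1.measurable measurable_const)).inter
      ((measurableSet_le c2.measurable measurable_const))
  have hsub : {z : Fin m → ℂ | (∑ n, Complex.normSq (z n)) ≤ R ^ 2
        ∧ B * (∑ n, Complex.normSq (z n))
            - Complex.normSq (∑ n, (b n : ℂ) * z n) ≤ s ^ 2} ⊆ φ ⁻¹' (A ×ˢ A) := by
    intro z hz
    obtain ⟨hz1, hz2⟩ := hz
    set x : Fin m → ℝ := fun n => (z n).re with hxdef
    set y : Fin m → ℝ := fun n => (z n).im with hydef
    have hZsplit : (∑ n, Complex.normSq (z n)) = (∑ n, (x n) ^ 2) + (∑ n, (y n) ^ 2) := by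
      rw [← Finset.sum_add_distrib]
      exact Finset.sum_congr rfl fun n _ => by rw [Complex.normSq_apply]; ring
    have hre : (∑ n, (b n : ℂ) * z n).re = ∑ n, b n * x n := by
      rw [Complex.re_sum]; exact Finset.sum_congr rfl fun n _ => by simp [Complex.mul_re, hxdef]
    have him : (∑ n, (b n : ℂ) * z n).im = ∑ n, b n * y n := by
      rw [Complex.im_sum]; exact Finset.sum_congr rfl fun n _ => by simp [Complex.mul_im, hydef]
    have hN : Complex.normSq (∑ n, (b n : ℂ) * z n)
        = (∑ n, b n * x n) ^ 2 + (∑ n, b n * y n) ^ 2 := by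
      rw [Complex.normSq_apply, hre, him]; ring
    have hxnn : (0:ℝ) ≤ ∑ n, (x n) ^ 2 := Finset.sum_nonneg fun n _ => sq_nonneg (x n)
    have hynn : (0:ℝ) ≤ ∑ n, (y n) ^ 2 := Finset.sum_nonneg fun n _ => sq_nonneg (y n)
    have hx2 : ∑ n, (x n) ^ 2 ≤ R ^ 2 := by nlinarith [hynn]
    have hy2 : ∑ n, (y n) ^ 2 ≤ R ^ 2 := by nlinarith [hxnn]
    have csx := Finset.sum_mul_sq_le_sq_mul_sq Finset.univ b x
    have csy := Finset.sum_mul_sq_le_sq_mul_sq Finset.univ b y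
    -- u-dot identities
    have hux : (∑ n, u n * x n) = (∑ n, b n * x n) / Real.sqrt B := by
      simp only [hudef, PiLp.toLp_apply, div_mul_eq_mul_div]
      exact (Finset.sum_div _ _ _).symm
    have huy : (∑ n, u n * y n) = (∑ n, b n * y n) / Real.sqrt B := by
      simp only [hudef, PiLp.toLp_apply, div_mul_eq_mul_div]
      exact (Finset.sum_div _ _ _).symm
    have hsqB : Real.sqrt B ^ 2 = B := Real.sq_sqrt hB.le
    have huxsq : (∑ n, u n * x n) ^ 2 = (∑ n, b n * x n) ^ 2 / B := by
      rw [hux, div_pow, hsqB]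
    have huysq : (∑ n, u n * y n) ^ 2 = (∑ n, b n * y n) ^ 2 / B := by
      rw [huy, div_pow, hsqB]
    have htsq : (s / Real.sqrt B) ^ 2 = s ^ 2 / B := by rw [div_pow, hsqB]
    -- membership
    have hmemx : x ∈ A := by
      constructor
      · rw [huxsq]
        have : (∑ n, b n * x n) ^ 2 / B ≤ (∑ n, (x n) ^ 2) := by
          rw [div_le_iff₀ hB]; nlinarith [csx]
        linarith
      · have hle1 : (∑ n, (x n) ^ 2) - (∑ n, u n * x n) ^ 2 ≤ R ^ 2 := by
          nlinarith [sq_nonneg (∑ n, u n * x n)]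
        have key : B * (∑ n, (x n) ^ 2) - (∑ n, b n * x n) ^ 2 ≤ s ^ 2 := by
          rw [hZsplit, hN] at hz2; nlinarith [csy]
        have hle2 : (∑ n, (x n) ^ 2) - (∑ n, u n * x n) ^ 2 ≤ (s / Real.sqrt B) ^ 2 := by
          rw [huxsq, htsq]
          have hrw : (∑ n, (x n) ^ 2) - (∑ n, b n * x n) ^ 2 / B
              = (B * (∑ n, (x n) ^ 2) - (∑ n, b n * x n) ^ 2) / B := by
            field_simp
          rw [hrw]
          exact (div_le_div_iff_of_pos_right hB).2 key
        rw [ht2min]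
        exact le_min hle1 hle2
    have hmemy : y ∈ A := by
      constructor
      · rw [huysq]
        have : (∑ n, b n * y n) ^ 2 / B ≤ (∑ n, (y n) ^ 2) := by
          rw [div_le_iff₀ hB]; nlinarith [csy]
        linarith
      · have hle1 : (∑ n, (y n) ^ 2) - (∑ n, u n * y n) ^ 2 ≤ R ^ 2 := by
          nlinarith [sq_nonneg (∑ n, u n * y n)]
        have key : B * (∑ n, (y n) ^ 2) - (∑ n, b n * y n) ^ 2 ≤ s ^ 2 := by
          rw [hZsplit, hN] at hz2; nlinarith [csx]
        have hle2 : (∑ n, (y n) ^ 2) - (∑ n, u n * y n) ^ 2 ≤ (s / Real.sqrt B) ^ 2 := by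
          rw [huysq, htsq]
          have hrw : (∑ n, (y n) ^ 2) - (∑ n, b n * y n) ^ 2 / B
              = (B * (∑ n, (y n) ^ 2) - (∑ n, b n * y n) ^ 2) / B := by
            field_simp
          rw [hrw]
          exact (div_le_div_iff_of_pos_right hB).2 key
        rw [ht2min]
        exact le_min hle1 hle2
    show φ z ∈ A ×ˢ A
    rw [hφapp z]
    exact Set.mk_mem_prod hmemx hmemy
  -- conclude
  have h1 : volume {z : Fin m → ℂ | (∑ n, Complex.normSq (z n)) ≤ R ^ 2
        ∧ B * (∑ n, Complex.normSq (z n))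
            - Complex.normSq (∑ n, (b n : ℂ) * z n) ≤ s ^ 2}
      ≤ volume (φ ⁻¹' (A ×ˢ A)) := measure_mono hsub
  have h2 : volume (φ ⁻¹' (A ×ˢ A)) = volume A * volume A := by
    rw [hφ.measure_preimage (hAmeas.prod hAmeas).nullMeasurableSet,
      Measure.volume_eq_prod, Measure.prod_prod]
  have h3 : volume A ≤ ENNReal.ofReal (2 * R) * ENNReal.ofReal (2 * min R (s / ‖b‖)) ^ (m - 1) := by
    refine le_trans (avol u hu hR ht0) ?_
    have hh : ENNReal.ofReal (2 * t) ≤ ENNReal.ofReal (2 * min R (s / ‖b‖)) :=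
      ENNReal.ofReal_le_ofReal (by linarith [htle])
    exact mul_le_mul' le_rfl (pow_le_pow_left' hh _)
  calc volume {z : Fin m → ℂ | (∑ n, Complex.normSq (z n)) ≤ R ^ 2
        ∧ B * (∑ n, Complex.normSq (z n))
            - Complex.normSq (∑ n, (b n : ℂ) * z n) ≤ s ^ 2}
      ≤ volume A * volume A := h1.trans h2.le
    _ ≤ _ := by rw [sq]; exact mul_le_mul' h3 h3

private lemma kfin {m : ℕ} (hm : 3 ≤ m) :
    (∫⁻ c : Fin m → ℝ, ENNReal.ofReal ((min 1 ‖c‖⁻¹) ^ (2 * (m - 1)))) < ⊤ := by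
  set k := 2 * (m - 1) with hkdef
  have hmk : (Module.finrank ℝ (Fin m → ℝ) : ℝ) < (k : ℝ) := by
    rw [Module.finrank_fin_fun]
    have : m < k := by omega
    exact_mod_cast this
  have hint : Integrable (fun c : Fin m → ℝ => (2:ℝ) ^ k * ((1 + ‖c‖) ^ (-(k:ℝ)))) :=
    (integrable_one_add_norm hmk).const_mul _
  refine lt_of_le_of_lt (lintegral_mono fun c => ?_) hint.lintegral_lt_top
  apply ENNReal.ofReal_le_ofReal
  have hpos : (0:ℝ) < 1 + ‖c‖ := by positivity
  have hrw : (1 + ‖c‖) ^ (-(k:ℝ)) = ((1 + ‖c‖) ^ k)⁻¹ := by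
    rw [Real.rpow_neg hpos.le, Real.rpow_natCast]
  rw [hrw]
  have hmin0 : 0 ≤ min 1 ‖c‖⁻¹ := le_min zero_le_one (by positivity)
  have hkey : min 1 ‖c‖⁻¹ * (1 + ‖c‖) ≤ 2 := by
    rcases le_total ‖c‖ 1 with h | h
    · calc min 1 ‖c‖⁻¹ * (1 + ‖c‖) ≤ 1 * (1 + ‖c‖) :=
          mul_le_mul_of_nonneg_right (min_le_left _ _) hpos.le
        _ ≤ 2 := by linarith
    · have hc : 0 < ‖c‖ := lt_of_lt_of_le one_pos h
      calc min 1 ‖c‖⁻¹ * (1 + ‖c‖) ≤ ‖c‖⁻¹ * (1 + ‖c‖) :=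
          mul_le_mul_of_nonneg_right (min_le_right _ _) hpos.le
        _ = ‖c‖⁻¹ + 1 := by field_simp
        _ ≤ 2 := by
          have : ‖c‖⁻¹ ≤ 1 := by
            rw [inv_le_one_iff₀]; right; exact h
          linarith
  have hpow : (min 1 ‖c‖⁻¹ * (1 + ‖c‖)) ^ k ≤ 2 ^ k :=
    pow_le_pow_left₀ (by positivity) hkey k
  rw [mul_pow] at hpow
  have h2 : (min 1 ‖c‖⁻¹) ^ k = ((min 1 ‖c‖⁻¹) ^ k * (1 + ‖c‖) ^ k) * ((1 + ‖c‖) ^ k)⁻¹ := by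
    field_simp
  rw [h2]
  exact mul_le_mul_of_nonneg_right hpow (by positivity)

private lemma bscale {m : ℕ} {R s : ℝ} (hR : 0 < R) (hs : 0 < s) :
    (∫⁻ b : Fin m → ℝ, ENNReal.ofReal ((2 * min R (s / ‖b‖)) ^ (2 * (m - 1))))
      = ENNReal.ofReal ((s / R) ^ m) * (ENNReal.ofReal ((2 * R) ^ (2 * (m - 1)))
          * ∫⁻ c : Fin m → ℝ, ENNReal.ofReal ((min 1 ‖c‖⁻¹) ^ (2 * (m - 1)))) := by
  classical
  set k := 2 * (m - 1) with hkdef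
  set ρ := s / R with hρdef
  have hρ : 0 < ρ := by positivity
  have hFmeas : Measurable fun b : Fin m → ℝ =>
      ENNReal.ofReal ((2 * min R (s / ‖b‖)) ^ k) := by
    apply Measurable.ennreal_ofReal
    apply Measurable.pow_const
    exact (measurable_const.min ((measurable_norm.inv).const_mul s)).const_mul 2
  have hXmeas : Measurable fun c : Fin m → ℝ => ENNReal.ofReal ((min 1 ‖c‖⁻¹) ^ k) := by
    apply Measurable.ennreal_ofReal
    apply Measurable.pow_const
    exact measurable_const.min measurable_norm.inv
  have hsmul : Measurable fun c : Fin m → ℝ => ρ • c := measurable_const_smul ρ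
  have hmap := Measure.map_addHaar_smul (volume : Measure (Fin m → ℝ)) hρ.ne'
  have hlm := lintegral_map (μ := (volume : Measure (Fin m → ℝ))) (f := fun b : Fin m → ℝ =>
      ENNReal.ofReal ((2 * min R (s / ‖b‖)) ^ k)) hFmeas hsmul
  rw [hmap, lintegral_smul_measure] at hlm
  -- hlm : ofReal |(ρ^finrank)⁻¹| * ∫⁻ b, F b = ∫⁻ c, F (ρ • c)
  have hfr : Module.finrank ℝ (Fin m → ℝ) = m := Module.finrank_fin_fun ℝ
  rw [hfr] at hlm
  have habs : |(ρ ^ m)⁻¹| = (ρ ^ m)⁻¹ := abs_of_nonneg (by positivity)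
  rw [habs] at hlm
  -- compute F (ρ • c)
  have hFρ : ∀ c : Fin m → ℝ, ENNReal.ofReal ((2 * min R (s / ‖ρ • c‖)) ^ k)
      = ENNReal.ofReal ((2 * R) ^ k) * ENNReal.ofReal ((min 1 ‖c‖⁻¹) ^ k) := by
    intro c
    have hnorm : ‖ρ • c‖ = ρ * ‖c‖ := by
      rw [norm_smul, Real.norm_eq_abs, abs_of_pos hρ]
    have hdiv : s / (ρ * ‖c‖) = R * ‖c‖⁻¹ := by
      have h0 : s * (R / s) = R := by field_simp
      rw [hρdef, div_eq_mul_inv, mul_inv, inv_div, ← mul_assoc, h0]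
    have hminrw : min R (s / ‖ρ • c‖) = R * min 1 ‖c‖⁻¹ := by
      rw [hnorm, hdiv, mul_min_of_nonneg _ _ hR.le, mul_one]
    rw [hminrw, ← ENNReal.ofReal_mul (by positivity), ← mul_pow]
    congr 2
    ring
  calc (∫⁻ b : Fin m → ℝ, ENNReal.ofReal ((2 * min R (s / ‖b‖)) ^ k))
      = ENNReal.ofReal (ρ ^ m) * (ENNReal.ofReal ((ρ ^ m)⁻¹)
          * ∫⁻ b : Fin m → ℝ, ENNReal.ofReal ((2 * min R (s / ‖b‖)) ^ k)) := by
        rw [← mul_assoc, ← ENNReal.ofReal_mul (by positivity), mul_inv_cancel₀ (by positivity),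
          ENNReal.ofReal_one, one_mul]
    _ = ENNReal.ofReal (ρ ^ m) * ∫⁻ c : Fin m → ℝ,
          ENNReal.ofReal ((2 * min R (s / ‖ρ • c‖)) ^ k) := by rw [smul_eq_mul] at hlm; rw [hlm]
    _ = ENNReal.ofReal (ρ ^ m) * (ENNReal.ofReal ((2 * R) ^ k)
          * ∫⁻ c : Fin m → ℝ, ENNReal.ofReal ((min 1 ‖c‖⁻¹) ^ k)) := by
        rw [← lintegral_const_mul _ hXmeas]
        congr 1
        exact lintegral_congr fun c => hFρ c
    _ = _ := by rw [hρdef]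

/-- For `d ≥ 5`, the integral of the Vandermonde weight `a²` over the
gauge-fixed `su(2)` valley `{(a,b,z) : V_B(a,b,z) < V₀, 2|a| > ε}` is finite, where
`V_B(a,b,z) = 8(a²+‖b‖²)‖z‖² − 8|b·z|² + 2(‖z‖⁴ − |z·z|²)`. -/
theorem su2_gauge_fixed_valley_weighted_integral_finite
    (d : ℕ) (hd : 5 ≤ d) (V₀ ε : ℝ) (hV₀ : 0 < V₀) (hε : 0 < ε) :
    (∫⁻ p in {p : ℝ × (Fin (d - 1) → ℝ) × (Fin (d - 1) → ℂ) |
        (8 * (p.1 ^ 2 + ∑ n, (p.2.1 n) ^ 2) * (∑ n, Complex.normSq (p.2.2 n))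
          - 8 * Complex.normSq (∑ n, (p.2.1 n : ℂ) * p.2.2 n)
          + 2 * ((∑ n, Complex.normSq (p.2.2 n)) ^ 2
              - Complex.normSq (∑ n, (p.2.2 n) ^ 2))) < V₀
        ∧ ε < 2 * |p.1|},
      ENNReal.ofReal (p.1 ^ 2)) < ⊤ := by
  classical
  have hm4 : 4 ≤ d - 1 := by omega
  haveI : NeZero (d - 1) := ⟨by omega⟩
  set m : ℕ := d - 1 with hmdef
  set k : ℕ := 2 * (m - 1) with hkdef
  set s : ℝ := Real.sqrt (V₀ / 8) with hsdef
  have hs0 : 0 < s := Real.sqrt_pos.2 (by linarith)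
  have hs2 : s ^ 2 = V₀ / 8 := Real.sq_sqrt (by linarith)
  -- abbreviations
  set Z : (Fin m → ℂ) → ℝ := fun z => ∑ n, Complex.normSq (z n) with hZdef
  set Bf : (Fin m → ℝ) → ℝ := fun b => ∑ n, (b n) ^ 2 with hBdef
  set Nf : (Fin m → ℝ) → (Fin m → ℂ) → ℝ :=
    fun b z => Complex.normSq (∑ n, (b n : ℂ) * z n) with hNdef
  set T : Set (ℝ × (Fin m → ℝ) × (Fin m → ℂ)) :=
    {p | ε / 2 < |p.1| ∧ p.1 ^ 2 * Z p.2.2 ≤ s ^ 2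
      ∧ Bf p.2.1 * Z p.2.2 - Nf p.2.1 p.2.2 ≤ s ^ 2} with hTdef
  -- continuity facts
  have hZcont : Continuous Z := by
    apply continuous_finset_sum
    intro n _
    exact Complex.continuous_normSq.comp (continuous_apply n)
  have hBcont : Continuous Bf := by
    apply continuous_finset_sum
    intro n _
    exact (continuous_apply n).pow 2
  have hNcont : Continuous fun q : (Fin m → ℝ) × (Fin m → ℂ) => Nf q.1 q.2 := by
    apply Complex.continuous_normSq.comp
    apply continuous_finset_sum
    intro n _
    exact ((Complex.continuous_ofReal.comp ((continuous_apply n).comp continuous_fst))).mul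
      ((continuous_apply n).comp continuous_snd)
  have hTmeas : MeasurableSet T := by
    refine MeasurableSet.inter ?_ (MeasurableSet.inter ?_ ?_)
    · exact measurableSet_lt measurable_const (continuous_fst.abs.measurable)
    · exact measurableSet_le
        (((continuous_fst.pow 2).mul (hZcont.comp (continuous_snd.snd))).measurable)
        measurable_const
    · exact measurableSet_le
        ((((hBcont.comp continuous_snd.fst).mul (hZcont.comp continuous_snd.snd)).sub
          (hNcont.comp continuous_snd)).measurable)
        measurable_const
  -- inclusion of the original set in T
  have hsub : {p : ℝ × (Fin m → ℝ) × (Fin m → ℂ) |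
        (8 * (p.1 ^ 2 + ∑ n, (p.2.1 n) ^ 2) * (∑ n, Complex.normSq (p.2.2 n))
          - 8 * Complex.normSq (∑ n, (p.2.1 n : ℂ) * p.2.2 n)
          + 2 * ((∑ n, Complex.normSq (p.2.2 n)) ^ 2
              - Complex.normSq (∑ n, (p.2.2 n) ^ 2))) < V₀
        ∧ ε < 2 * |p.1|} ⊆ T := by
    rintro ⟨a, b, z⟩ ⟨hV, ha⟩
    have hcs := cs_complex b z
    have htri := tri z
    have hZnn : 0 ≤ Z z := Finset.sum_nonneg fun n _ => Complex.normSq_nonneg _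
    simp only [hTdef, Set.mem_setOf_eq]
    refine ⟨by linarith, ?_, ?_⟩
    · have : 8 * (a ^ 2 * Z z) ≤ 8 * (a ^ 2 + Bf b) * Z z
          - 8 * Complex.normSq (∑ n, (b n : ℂ) * z n)
          + 2 * ((Z z) ^ 2 - Complex.normSq (∑ n, (z n) ^ 2)) := by
        simp only [hZdef, hBdef, hNdef]
        nlinarith [hcs, htri]
      rw [hs2]
      simp only [hZdef, hBdef, hNdef] at hV this ⊢
      nlinarith
    · have : 8 * (Bf b * Z z - Nf b z) ≤ 8 * (a ^ 2 + Bf b) * Z z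
          - 8 * Complex.normSq (∑ n, (b n : ℂ) * z n)
          + 2 * ((Z z) ^ 2 - Complex.normSq (∑ n, (z n) ^ 2)) := by
        simp only [hZdef, hBdef, hNdef]
        nlinarith [htri, sq_nonneg a, hZnn]
      rw [hs2]
      simp only [hZdef, hBdef, hNdef] at hV this ⊢
      nlinarith
  refine lt_of_le_of_lt (lintegral_mono_set hsub) ?_
  -- Tonelli
  set f : ℝ × (Fin m → ℝ) × (Fin m → ℂ) → ENNReal := fun p => ENNReal.ofReal (p.1 ^ 2)
    with hfdef
  have hfmeas : Measurable f := (measurable_fst.pow_const 2).ennreal_ofReal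
  set Ts : ℝ → Set ((Fin m → ℝ) × (Fin m → ℂ)) := fun a => {q | (a, q) ∈ T} with hTsdef
  have hTsmeas : ∀ a, MeasurableSet (Ts a) := fun a => measurable_prodMk_left hTmeas
  have htonelli : (∫⁻ p in T, f p)
      = ∫⁻ a : ℝ, ENNReal.ofReal (a ^ 2) * volume (Ts a) := by
    rw [← lintegral_indicator hTmeas, Measure.volume_eq_prod,
      lintegral_prod _ (hfmeas.indicator hTmeas).aemeasurable]
    refine lintegral_congr fun a => ?_
    have hind : ∀ q : (Fin m → ℝ) × (Fin m → ℂ),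
        T.indicator f (a, q) = (Ts a).indicator (fun _ => ENNReal.ofReal (a ^ 2)) q := by
      intro q
      by_cases h : (a, q) ∈ T
      · rw [Set.indicator_of_mem h, Set.indicator_of_mem (by exact h)]
      · rw [Set.indicator_of_notMem h, Set.indicator_of_notMem (by exact h)]
    rw [lintegral_congr hind, lintegral_indicator (hTsmeas a), setLIntegral_const]
  rw [htonelli]
  -- the per-a bound
  set U : Set ℝ := {a : ℝ | ε / 2 < |a|} with hUdef
  have hUmeas : MeasurableSet U :=
    measurableSet_lt measurable_const measurable_norm
  set Km : ENNReal := ∫⁻ c : Fin m → ℝ, ENNReal.ofReal ((min 1 ‖c‖⁻¹) ^ k) with hKmdef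
  have hKmfin : Km < ⊤ := kfin (by omega)
  set E : ENNReal := ENNReal.ofReal (2 ^ (k + 2) * s ^ (2 * m)) * Km with hEdef
  have hEfin : E < ⊤ := ENNReal.mul_lt_top ENNReal.ofReal_lt_top hKmfin
  have hpoint : ∀ a : ℝ, ENNReal.ofReal (a ^ 2) * volume (Ts a)
      ≤ E * U.indicator (fun a => ENNReal.ofReal (|a| ^ 2 / |a| ^ m)) a := by
    intro a
    by_cases haU : a ∈ U
    swap
    · have hTse : Ts a = ∅ := by
        ext q
        simp only [hTsdef, Set.mem_setOf_eq, hTdef, Set.mem_empty_iff_false, iff_false]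
        intro hmem
        exact haU hmem.1
      rw [hTse]
      simp
    · have ha : ε / 2 < |a| := haU
      have ha0 : 0 < |a| := lt_trans (by linarith) ha
      have hane : a ≠ 0 := by
        intro h; rw [h] at ha0; simp at ha0
      set R : ℝ := s / |a| with hRdef
      have hR0 : 0 < R := by positivity
      -- slice bound in z for each b ≠ 0
      have hzslice : ∀ b : Fin m → ℝ, b ≠ 0 →
          volume {z : Fin m → ℂ | (a, b, z) ∈ T}
            ≤ ENNReal.ofReal ((2 * R) ^ 2) * ENNReal.ofReal ((2 * min R (s / ‖b‖)) ^ k) := by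
        intro b hb
        have hzsub : {z : Fin m → ℂ | (a, b, z) ∈ T}
            ⊆ {z : Fin m → ℂ | (∑ n, Complex.normSq (z n)) ≤ R ^ 2
                ∧ (∑ n, (b n) ^ 2) * (∑ n, Complex.normSq (z n))
                    - Complex.normSq (∑ n, (b n : ℂ) * z n) ≤ s ^ 2} := by
          intro z hz
          obtain ⟨-, h2, h3⟩ := hz
          constructor
          · have hR2 : R ^ 2 = s ^ 2 / a ^ 2 := by
              rw [hRdef, div_pow, sq_abs]
            rw [hR2, le_div_iff₀ (by positivity)]
            simp only [hZdef] at h2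
            linarith [h2]
          · exact h3
        have hmin0 : 0 ≤ min R (s / ‖b‖) :=
          le_min hR0.le (div_nonneg hs0.le (norm_nonneg _))
        have hk2 : (m - 1) * 2 = k := by rw [hkdef]; ring
        have heq : (ENNReal.ofReal (2 * R) * ENNReal.ofReal (2 * min R (s / ‖b‖)) ^ (m - 1)) ^ 2
            = ENNReal.ofReal ((2 * R) ^ 2) * ENNReal.ofReal ((2 * min R (s / ‖b‖)) ^ k) := by
          rw [mul_pow, ← pow_mul, hk2, ENNReal.ofReal_pow (by positivity),
            ENNReal.ofReal_pow (by positivity)]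
        exact (measure_mono hzsub).trans ((zvol b hb hR0.le hs0.le).trans heq.le)
      -- integrate over b
      have hFmeas : Measurable fun b : Fin m → ℝ =>
          ENNReal.ofReal ((2 * min R (s / ‖b‖)) ^ k) := by
        apply Measurable.ennreal_ofReal
        apply Measurable.pow_const
        exact (measurable_const.min ((measurable_norm.inv).const_mul s)).const_mul 2
      have hvolTs : volume (Ts a) = ∫⁻ b, volume {z : Fin m → ℂ | (a, b, z) ∈ T} := by
        rw [Measure.volume_eq_prod, Measure.prod_apply (hTsmeas a)]
        rfl
      have h0sing : volume ({(0 : Fin m → ℝ)} : Set (Fin m → ℝ)) = 0 := by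
        rw [← Set.univ_pi_singleton (0 : Fin m → ℝ), volume_pi_pi]
        simp only [Real.volume_singleton, Finset.prod_const]
        exact zero_pow (by simp [hmdef]; omega)
      have hae : ∀ᵐ b : Fin m → ℝ, volume {z : Fin m → ℂ | (a, b, z) ∈ T}
          ≤ ENNReal.ofReal ((2 * R) ^ 2) * ENNReal.ofReal ((2 * min R (s / ‖b‖)) ^ k) := by
        rw [ae_iff]
        refine measure_mono_null ?_ h0sing
        intro b hb
        rw [Set.mem_singleton_iff]
        by_contra hne
        exact hb (hzslice b hne)
      have hTs2 : volume (Ts a)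
          ≤ ENNReal.ofReal ((2 * R) ^ 2) * (ENNReal.ofReal ((s / R) ^ m)
            * (ENNReal.ofReal ((2 * R) ^ k) * Km)) := by
        rw [hvolTs]
        refine le_trans (lintegral_mono_ae hae) ?_
        rw [lintegral_const_mul _ hFmeas, bscale hR0 hs0, hKmdef]
      have hsR : s / R = |a| := by
        rw [hRdef]
        field_simp
      rw [hsR] at hTs2
      -- combine
      have hreal : a ^ 2 * ((2 * R) ^ 2 * (|a| ^ m * (2 * R) ^ k))
          = 2 ^ (k + 2) * s ^ (2 * m) * (|a| ^ 2 / |a| ^ m) := by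
        have h1 : (2 * R) ^ 2 * (|a| ^ m * (2 * R) ^ k) = (2 * R) ^ (2 * m) * |a| ^ m := by
          rw [show 2 * m = 2 + k by omega, pow_add]; ring
        have h2 : (2:ℝ) ^ (k + 2) = 2 ^ (2 * m) := by rw [show k + 2 = 2 * m by omega]
        rw [h1, h2, hRdef]
        rw [← sq_abs a]
        have hab : |a| ≠ 0 := ne_of_gt ha0
        field_simp
        rw [div_pow, ← pow_mul, mul_comm m 2, div_mul_cancel₀ _ (pow_ne_zero _ hab), mul_pow]
      calc ENNReal.ofReal (a ^ 2) * volume (Ts a)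
          ≤ ENNReal.ofReal (a ^ 2) * (ENNReal.ofReal ((2 * R) ^ 2)
            * (ENNReal.ofReal (|a| ^ m) * (ENNReal.ofReal ((2 * R) ^ k) * Km))) :=
            mul_le_mul' le_rfl hTs2
        _ = ENNReal.ofReal (a ^ 2 * ((2 * R) ^ 2 * (|a| ^ m * (2 * R) ^ k))) * Km := by
            rw [ENNReal.ofReal_mul (by positivity), ENNReal.ofReal_mul (by positivity),
              ENNReal.ofReal_mul (by positivity)]
            ring
        _ = ENNReal.ofReal (2 ^ (k + 2) * s ^ (2 * m) * (|a| ^ 2 / |a| ^ m)) * Km := by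
            rw [hreal]
        _ = E * U.indicator (fun a => ENNReal.ofReal (|a| ^ 2 / |a| ^ m)) a := by
            rw [Set.indicator_of_mem haU, ENNReal.ofReal_mul (by positivity), hEdef]
            ring
  refine lt_of_le_of_lt (lintegral_mono hpoint) ?_
  rw [lintegral_const_mul' _ _ hEfin.ne, lintegral_indicator hUmeas]
  exact ENNReal.mul_lt_top hEfin (aint hm4 (by linarith : (0:ℝ) < ε / 2))
end

section
/- Let N ≥ 2 and d ≥ 2 be integers and V₀ > 0, ε > 0 reals. Let X¹,…,X^{d−1} be skew-Hermitian N×N complex matrices and X^d = diag(i a₁,…,i a_N) with a₁,…,a_N real, and suppose −(1/2)·Σ_{m,n=1}^{d} Tr([X^m, X^n]²) < V₀. Then for every pair 1 ≤ i < j ≤ N with |a_i − a_j| > ε, one has Σ_{n=1}^{d−1} |X^n_{ij}|² < V₀/(2ε²). -/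
open Matrix

lemma trace_sq_skew {N : ℕ} (C : Matrix (Fin N) (Fin N) ℂ) (hC : Cᴴ = -C) :
    Matrix.trace (C * C) = -((∑ i, ∑ k, Complex.normSq (C i k) : ℝ) : ℂ) := by
  have hk : ∀ i k, C k i = -(starRingEnd ℂ) (C i k) := by
    intro i k
    have := congrFun (congrFun hC k) i
    simp [Matrix.conjTranspose_apply] at this
    rw [this]; simp
  rw [Matrix.trace]
  push_cast
  rw [← Finset.sum_neg_distrib]
  refine Finset.sum_congr rfl fun i _ => ?_
  rw [Matrix.diag_apply, Matrix.mul_apply, ← Finset.sum_neg_distrib]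
  refine Finset.sum_congr rfl fun k _ => ?_
  rw [hk i k, mul_neg, Complex.mul_conj]

lemma comm_skew {N : ℕ} (A B : Matrix (Fin N) (Fin N) ℂ) (hA : Aᴴ = -A) (hB : Bᴴ = -B) :
    (A * B - B * A)ᴴ = -(A * B - B * A) := by
  simp [Matrix.conjTranspose_sub, Matrix.conjTranspose_mul, hA, hB]

noncomputable def offF {N d : ℕ} (X : Fin d → Matrix (Fin N) (Fin N) ℂ) (m n : Fin d) : ℝ :=
  ∑ i, ∑ k, Complex.normSq ((X m * X n - X n * X m) i k)

lemma offF_nonneg {N d : ℕ} (X : Fin d → Matrix (Fin N) (Fin N) ℂ) (m n : Fin d) :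
    0 ≤ offF X m n :=
  Finset.sum_nonneg fun _ _ => Finset.sum_nonneg fun _ _ => Complex.normSq_nonneg _

lemma offF_symm {N d : ℕ} (X : Fin d → Matrix (Fin N) (Fin N) ℂ) (m n : Fin d) :
    offF X m n = offF X n m := by
  unfold offF
  refine Finset.sum_congr rfl fun i _ => Finset.sum_congr rfl fun k _ => ?_
  have : (X n * X m - X m * X n) i k = -((X m * X n - X n * X m) i k) := by
    simp [Matrix.sub_apply]
  rw [this, Complex.normSq_neg]

lemma offF_self {N d : ℕ} (X : Fin d → Matrix (Fin N) (Fin N) ℂ) (m : Fin d) :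
    offF X m m = 0 := by
  unfold offF
  simp


/-- On the valley `{V_B < V₀}`, with `X^d = diag(i a₁,…,i a_N)` diagonal
and `X¹,…,X^{d-1}` skew-Hermitian, every pair `i < j` with eigenvalue gap
`|aᵢ - aⱼ| > ε` has off-diagonal components bounded by `∑_n |Xⁿᵢⱼ|² < V₀/(2ε²)`. -/
theorem valley_off_diagonal_bound
    (N d : ℕ) (hN : 2 ≤ N) (hd : 2 ≤ d) (V₀ ε : ℝ) (hV₀ : 0 < V₀) (hε : 0 < ε)
    (X : Fin d → Matrix (Fin N) (Fin N) ℂ) (a : Fin N → ℝ)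
    (hskew : ∀ n : Fin (d - 1), (X (Fin.castLE (Nat.sub_le d 1) n))ᴴ
      = -(X (Fin.castLE (Nat.sub_le d 1) n)))
    (hdiag : X ⟨d - 1, by omega⟩ = Matrix.diagonal fun i => Complex.I * (a i : ℂ))
    (hvalley : (-(1 / 2 : ℂ) * ∑ m : Fin d, ∑ n : Fin d,
        Matrix.trace ((X m * X n - X n * X m) * (X m * X n - X n * X m))).re < V₀) :
    ∀ i j : Fin N, i < j → ε < |a i - a j| →
      ∑ n : Fin (d - 1), Complex.normSq (X (Fin.castLE (Nat.sub_le d 1) n) i j)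
        < V₀ / (2 * ε ^ 2) := by
  intro i j hij hgap
  obtain ⟨e, rfl⟩ : ∃ e, d = e + 1 := ⟨d - 1, by omega⟩
  show ∑ n : Fin e, Complex.normSq (X (Fin.castLE (Nat.le_succ e) n) i j) < V₀ / (2 * ε ^ 2)
  set L : Fin (e + 1) := Fin.last e with hL
  have hdiag' : X L = Matrix.diagonal fun i => Complex.I * (a i : ℂ) := hdiag
  -- all matrices are skew-Hermitian
  have hskew' : ∀ m : Fin (e + 1), (X m)ᴴ = -(X m) := by
    intro m
    by_cases hm : (m : ℕ) < e
    · exact hskew ⟨m, by omega⟩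
    · have hm' : m = L := by
        apply Fin.ext
        have := m.isLt; simp [hL]; omega
      rw [hm', hdiag']
      ext p q
      rcases eq_or_ne p q with rfl | hpq
      · simp [Matrix.conjTranspose_apply, Matrix.diagonal_apply_eq, Complex.ext_iff]
      · simp [Matrix.conjTranspose_apply, Matrix.diagonal_apply_ne _ hpq,
          Matrix.diagonal_apply_ne _ hpq.symm]
  -- rewrite the valley bound in terms of offF
  have htr : ∀ m n : Fin (e + 1),
      Matrix.trace ((X m * X n - X n * X m) * (X m * X n - X n * X m))
        = -((offF X m n : ℝ) : ℂ) :=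
    fun m n => trace_sq_skew _ (comm_skew _ _ (hskew' m) (hskew' n))
  have hre : (-(1 / 2 : ℂ) * ∑ m : Fin (e+1), ∑ n : Fin (e+1),
        Matrix.trace ((X m * X n - X n * X m) * (X m * X n - X n * X m)))
      = (((1 / 2 : ℝ) * ∑ m : Fin (e+1), ∑ n : Fin (e+1), offF X m n : ℝ) : ℂ) := by
    simp only [htr, Finset.sum_neg_distrib]
    push_cast
    ring
  rw [hre, Complex.ofReal_re] at hvalley
  set S : ℝ := ∑ m : Fin (e+1), ∑ n : Fin (e+1), offF X m n with hSdef
  -- S ≥ 2 * ∑_{m ≠ L} offF X L m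
  have hsplit : S = (∑ n : Fin (e+1), offF X L n)
      + ∑ m ∈ Finset.univ.erase L, ∑ n : Fin (e+1), offF X m n := by
    rw [hSdef, ← Finset.add_sum_erase _ _ (Finset.mem_univ L)]
  have hinner : ∀ m : Fin (e+1), offF X L m ≤ ∑ n : Fin (e+1), offF X m n := by
    intro m
    rw [offF_symm]
    exact Finset.single_le_sum (fun n _ => offF_nonneg X m n) (Finset.mem_univ L)
  have h2 : 2 * ∑ m ∈ Finset.univ.erase L, offF X L m ≤ S := by
    rw [hsplit, ← Finset.add_sum_erase _ (fun n => offF X L n) (Finset.mem_univ L),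
      offF_self, zero_add]
    have := Finset.sum_le_sum (fun m (_ : m ∈ Finset.univ.erase L) => hinner m)
    linarith
  -- reindex erased sum over Fin e
  have h3 : ∑ m ∈ Finset.univ.erase L, offF X L m
      = ∑ n : Fin e, offF X L (Fin.castLE (Nat.le_succ e) n) := by
    have h4 := Fin.sum_univ_castSucc (fun m : Fin (e+1) => offF X L m)
    have h5 : (∑ m : Fin (e+1), offF X L m)
        = offF X L L + ∑ m ∈ Finset.univ.erase L, offF X L m :=
      (Finset.add_sum_erase _ _ (Finset.mem_univ L)).symm
    rw [h4] at h5
    simp only [← hL, offF_self, add_zero, zero_add] at h5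
    rw [← h5]
    rfl
  -- per-term bound
  have hij' : i ≠ j := ne_of_lt hij
  have hgap2 : ε ^ 2 < (a i - a j) ^ 2 := by
    have h1 : ε ^ 2 < |a i - a j| ^ 2 := by nlinarith [abs_nonneg (a i - a j)]
    rwa [sq_abs] at h1
  have h4 : ∀ n : Fin e, 2 * (ε ^ 2 * Complex.normSq (X (Fin.castLE (Nat.le_succ e) n) i j))
      ≤ offF X L (Fin.castLE (Nat.le_succ e) n) := by
    intro n
    set A := X (Fin.castLE (Nat.le_succ e) n) with hA
    set C := X L * A - A * X L with hC
    have hCentry : ∀ p q : Fin N, C p q = Complex.I * ((a p : ℂ) - a q) * A p q := by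
      intro p q
      simp only [hC, hdiag', Matrix.sub_apply, Matrix.diagonal_mul, Matrix.mul_diagonal]
      ring
    have hnsq : ∀ p q : Fin N,
        Complex.normSq (C p q) = (a p - a q) ^ 2 * Complex.normSq (A p q) := by
      intro p q
      rw [hCentry p q, Complex.normSq_mul, Complex.normSq_mul, Complex.normSq_I]
      have hc : ((a p : ℂ) - a q) = ((a p - a q : ℝ) : ℂ) := by push_cast; ring
      rw [hc, Complex.normSq_ofReal]
      ring
    have hAji : Complex.normSq (A j i) = Complex.normSq (A i j) := by
      have hsk := congrFun (congrFun (hskew' (Fin.castLE (Nat.le_succ e) n)) j) i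
      rw [Matrix.conjTranspose_apply, Matrix.neg_apply] at hsk
      calc Complex.normSq (A j i) = Complex.normSq (-A j i) := (Complex.normSq_neg _).symm
        _ = Complex.normSq ((starRingEnd ℂ) (A i j)) := by rw [← hsk]; rfl
        _ = Complex.normSq (A i j) := Complex.normSq_conj _
    have hsub : Complex.normSq (C i j) + Complex.normSq (C j i)
        ≤ ∑ p, ∑ q, Complex.normSq (C p q) := by
      have hrow : ∀ p : Fin N, (0 : ℝ) ≤ ∑ q, Complex.normSq (C p q) :=
        fun p => Finset.sum_nonneg fun q _ => Complex.normSq_nonneg _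
      have hi : Complex.normSq (C i j) ≤ ∑ q, Complex.normSq (C i q) :=
        Finset.single_le_sum (fun q _ => Complex.normSq_nonneg _) (Finset.mem_univ j)
      have hj : Complex.normSq (C j i) ≤ ∑ q, Complex.normSq (C j q) :=
        Finset.single_le_sum (fun q _ => Complex.normSq_nonneg _) (Finset.mem_univ i)
      have hpair : (∑ p ∈ ({i, j} : Finset (Fin N)), ∑ q, Complex.normSq (C p q))
          ≤ ∑ p, ∑ q, Complex.normSq (C p q) :=
        Finset.sum_le_sum_of_subset_of_nonneg (Finset.subset_univ _) (fun p _ _ => hrow p)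
      rw [Finset.sum_pair hij'] at hpair
      linarith
    have hbound1 : ε ^ 2 * Complex.normSq (A i j) ≤ Complex.normSq (C i j) := by
      rw [hnsq]
      nlinarith [Complex.normSq_nonneg (A i j)]
    have hbound2 : ε ^ 2 * Complex.normSq (A i j) ≤ Complex.normSq (C j i) := by
      rw [hnsq, hAji]
      nlinarith [Complex.normSq_nonneg (A i j)]
    have hoff : offF X L (Fin.castLE (Nat.le_succ e) n)
        = ∑ p, ∑ q, Complex.normSq (C p q) := rfl
    rw [hoff]
    linarith
  have hsum : ∑ n : Fin e, 2 * (ε ^ 2 * Complex.normSq (X (Fin.castLE (Nat.le_succ e) n) i j))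
      ≤ ∑ n : Fin e, offF X L (Fin.castLE (Nat.le_succ e) n) :=
    Finset.sum_le_sum fun n _ => h4 n
  rw [← h3, ← Finset.mul_sum, ← Finset.mul_sum] at hsum
  rw [lt_div_iff₀ (by positivity)]
  linarith
end

section
/- Let N ≥ 2 be an integer, b₁,…,b_N real numbers, and T > 0. If Σ_{1≤i<j≤N} (b_i − b_j)² > T, then the number of pairs (i,j) with 1 ≤ i < j ≤ N and (b_i − b_j)² > T/(2N(N−1)) is at least N − 1. -/
/-- If `∑_{i<j}(bᵢ-bⱼ)² > T`, then at least `N−1` pairs `i < j`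
satisfy `(bᵢ-bⱼ)² > T/(2N(N−1))`. -/
theorem pigeonhole_pairs
    (N : ℕ) (hN : 2 ≤ N) (b : Fin N → ℝ) (T : ℝ) (hT : 0 < T)
    (h : T < ∑ i : Fin N, ∑ j : Fin N, if i < j then (b i - b j) ^ 2 else 0) :
    N - 1 ≤ (Finset.univ.filter (fun p : Fin N × Fin N =>
        p.1 < p.2 ∧ T / (2 * (N : ℝ) * ((N : ℝ) - 1)) < (b p.1 - b p.2) ^ 2)).card := by
  classical
  set c : ℝ := T / (2 * (N : ℝ) * ((N : ℝ) - 1)) with hc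
  have hN2 : (2:ℝ) ≤ (N:ℝ) := by exact_mod_cast hN
  have hne : 2 * (N:ℝ) * ((N:ℝ) - 1) ≠ 0 := by nlinarith
  have hc4 : 4 * c * ((N:ℝ) * ((N:ℝ) - 1)) = 2 * T := by
    rw [hc]; field_simp [show (N:ℝ) - 1 ≠ 0 by linarith]; ring
  have hcpos : 0 < c := by
    rw [hc]; apply div_pos hT; nlinarith
  -- Step 1: find k < l with 4c < (b k - b l)^2
  obtain ⟨k, l, hkl, hbig⟩ : ∃ k l : Fin N, k < l ∧ 4 * c < (b k - b l)^2 := by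
    by_contra hcon
    push_neg at hcon
    have hsym : ∀ i j : Fin N, (b i - b j)^2 ≤ if i = j then 0 else 4*c := by
      intro i j
      rcases lt_trichotomy i j with h' | h' | h'
      · simp [h'.ne]; exact hcon i j h'
      · simp [h']
      · have := hcon j i h'
        simp [h'.ne']
        nlinarith [this]
    have e2 : ∑ i : Fin N, ∑ j : Fin N, (if j < i then (b i - b j)^2 else 0)
        = ∑ i : Fin N, ∑ j : Fin N, (if i < j then (b i - b j)^2 else 0) := by
      rw [Finset.sum_comm]
      apply Finset.sum_congr rfl; intro i _
      apply Finset.sum_congr rfl; intro j _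
      by_cases h' : i < j <;> simp [h'] <;> ring_nf
    have hfull : 2 * T < ∑ i : Fin N, ∑ j : Fin N, (b i - b j)^2 := by
      have e1 : ∀ i j : Fin N, (b i - b j)^2
          = (if i < j then (b i - b j)^2 else 0) + (if j < i then (b i - b j)^2 else 0) := by
        intro i j
        rcases lt_trichotomy i j with h' | h' | h'
        · simp [h', asymm h']
        · subst h'; simp
        · simp [h', asymm h']
      have hsplit : ∑ i : Fin N, ∑ j : Fin N, (b i - b j)^2
          = (∑ i : Fin N, ∑ j : Fin N, (if i < j then (b i - b j)^2 else 0))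
            + (∑ i : Fin N, ∑ j : Fin N, (if j < i then (b i - b j)^2 else 0)) := by
        rw [← Finset.sum_add_distrib]
        apply Finset.sum_congr rfl; intro i _
        rw [← Finset.sum_add_distrib]
        apply Finset.sum_congr rfl; intro j _
        exact e1 i j
      rw [hsplit, e2]; linarith
    have hbound : ∑ i : Fin N, ∑ j : Fin N, (b i - b j)^2
        ≤ (N:ℝ) * (((N:ℝ) - 1) * (4*c)) := by
      have h1 : ∀ i : Fin N, ∑ j : Fin N, (if i = j then (0:ℝ) else 4*c)
          = ((N:ℝ) - 1) * (4*c) := by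
        intro i
        have : (fun j => if i = j then (0:ℝ) else 4*c)
            = fun j => 4*c - (if i = j then 4*c else 0) := by
          funext j; by_cases h' : i = j <;> simp [h']
        rw [this, Finset.sum_sub_distrib, Finset.sum_const, Finset.sum_ite_eq]
        simp; ring
      calc ∑ i : Fin N, ∑ j : Fin N, (b i - b j)^2
          ≤ ∑ i : Fin N, ∑ j : Fin N, (if i = j then (0:ℝ) else 4*c) := by
            apply Finset.sum_le_sum; intro i _
            apply Finset.sum_le_sum; intro j _
            exact hsym i j
        _ = ∑ i : Fin N, ((N:ℝ) - 1) * (4*c) := by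
            apply Finset.sum_congr rfl; intro i _; exact h1 i
        _ = (N:ℝ) * (((N:ℝ) - 1) * (4*c)) := by
            rw [Finset.sum_const, Finset.card_univ, Fintype.card_fin, nsmul_eq_mul]
    nlinarith [hfull, hbound, hc4]
  -- Step 2: triangle inequality
  have hkne : k ≠ l := ne_of_lt hkl
  have key : ∀ i : Fin N, c < (b k - b i)^2 ∨ c < (b i - b l)^2 := by
    intro i
    by_contra hcon
    push_neg at hcon
    nlinarith [hcon.1, hcon.2, hbig, sq_nonneg ((b k - b i) - (b i - b l))]
  -- Step 3: the map
  set f : Fin N → Fin N × Fin N := fun i =>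
    if c < (b k - b i)^2 then (if k < i then (k, i) else (i, k))
    else (if i < l then (i, l) else (l, i)) with hf
  set S := Finset.univ.filter (fun p : Fin N × Fin N =>
      p.1 < p.2 ∧ c < (b p.1 - b p.2) ^ 2) with hSdef
  set A : Finset (Fin N) := Finset.univ \ {k, l} with hA
  have hmem : ∀ i ∈ A, f i ∈ S := by
    intro i hi
    simp only [hA, Finset.mem_sdiff, Finset.mem_insert, Finset.mem_singleton] at hi
    push_neg at hi
    obtain ⟨-, hik, hil⟩ := hi
    simp only [hSdef, Finset.mem_filter, Finset.mem_univ, true_and, hf]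
    by_cases h1 : c < (b k - b i)^2
    · simp only [h1, if_true]
      rcases lt_or_gt_of_ne (Ne.symm hik) with h2 | h2
      · simp [h2]; exact h1
      · simp [not_lt_of_gt h2, h2]
        nlinarith [h1]
    · have h2 := (key i).resolve_left h1
      simp only [h1, if_false]
      rcases lt_or_gt_of_ne hil with h3 | h3
      · simp [h3]; exact h2
      · simp [not_lt_of_gt h3, h3]
        nlinarith [h2]
  -- left inverse
  set g : Fin N × Fin N → Fin N := fun p => if p.1 = k ∨ p.1 = l then p.2 else p.1 with hg
  have hginv : ∀ i ∈ A, g (f i) = i := by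
    intro i hi
    simp only [hA, Finset.mem_sdiff, Finset.mem_insert, Finset.mem_singleton] at hi
    push_neg at hi
    obtain ⟨-, hik, hil⟩ := hi
    simp only [hf, hg]
    by_cases h1 : c < (b k - b i)^2 <;> by_cases h2 : k < i <;> by_cases h3 : i < l <;>
      simp [h1, h2, h3, hik, hil]
  have hinj : Set.InjOn f A := by
    intro a ha a' ha' hab
    have := hginv a ha
    rw [hab, hginv a' ha'] at this
    exact this.symm
  have hklS : (k, l) ∈ S := by
    simp only [hSdef, Finset.mem_filter, Finset.mem_univ, true_and]
    exact ⟨hkl, by nlinarith [hbig, hcpos]⟩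
  have hklnot : (k, l) ∉ A.image f := by
    intro hmem'
    obtain ⟨i, hi, hfi⟩ := Finset.mem_image.mp hmem'
    have h1 : g (f i) = i := hginv i hi
    rw [hfi] at h1
    simp only [hg, if_pos (Or.inl rfl)] at h1
    simp only [hA, Finset.mem_sdiff, Finset.mem_insert, Finset.mem_singleton] at hi
    push_neg at hi
    exact hi.2.2 h1.symm
  have hsub : insert (k, l) (A.image f) ⊆ S := by
    intro p hp
    rcases Finset.mem_insert.mp hp with h' | h'
    · rw [h']; exact hklS
    · obtain ⟨i, hi, hfi⟩ := Finset.mem_image.mp h'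
      rw [← hfi]; exact hmem i hi
  have hcardA : A.card = N - 2 := by
    rw [hA, Finset.card_sdiff_of_subset (Finset.subset_univ _)]
    rw [Finset.card_insert_of_notMem (by simp [hkne]), Finset.card_singleton]
    simp
  have hcard : (insert (k, l) (A.image f)).card = N - 1 := by
    rw [Finset.card_insert_of_notMem hklnot, Finset.card_image_of_injOn hinj, hcardA]
    omega
  calc N - 1 = (insert (k, l) (A.image f)).card := hcard.symm
    _ ≤ S.card := Finset.card_le_card hsub
end
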